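/- Let (X,μ) be a measure space with μ(X) < ∞, let 1 ≤ r ≤ p < ∞, and let g : X → ℂ be a measurable function such that the pointwise product f·g belongs to L^r(X,μ) for every f ∈ L^p(X,μ). Then g ∈ L^q(X,μ), where q is determined by 1/p + 1/q = 1/r (with q = ∞ when p = r). -/

import Mathlib

open MeasureTheory ENNReal

open Filter Set Topology

theorem mul_op_bound
    {X : Type*} [MeasurableSpace X] (μ : Measure X)
    (p r : ℝ≥0∞) (hr : 1 ≤ r) (hrp : r ≤ p) (hp : p ≠ ∞)
    (g : X → ℂ)
    (hmul : ∀ f : X → ℂ, MemLp f p μ → MemLp (fun x => f x * g x) r μ) :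
    ∃ C : ℝ≥0∞, C ≠ ∞ ∧ ∀ f : X → ℂ, (hf : MemLp f p μ) →
      eLpNorm (fun x => f x * g x) r μ ≤ C * eLpNorm f p μ := by
  have hp1 : 1 ≤ p := hr.trans hrp
  haveI : Fact (1 ≤ p) := ⟨hp1⟩
  haveI : Fact (1 ≤ r) := ⟨hr⟩
  have hp0 : p ≠ 0 := fun h => by simp [h] at hp1
  have hr0 : r ≠ 0 := fun h => by simp [h] at hr
  have hrtop : r ≠ ∞ := (hrp.trans_lt hp.lt_top).ne
  let T : Lp ℂ p μ →ₗ[ℂ] Lp ℂ r μ :=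
  { toFun := fun f => (hmul f (Lp.memLp f)).toLp _
    map_add' := by
      intro f f'
      refine (MemLp.toLp_congr _ (((hmul f (Lp.memLp f))).add (hmul f' (Lp.memLp f'))) ?_).trans
        (MemLp.toLp_add _ _)
      filter_upwards [Lp.coeFn_add f f'] with x hx
      simp only [hx, Pi.add_apply, add_mul]
    map_smul' := by
      intro c f
      show (hmul _ (Lp.memLp (c • f))).toLp _ = c • (hmul _ (Lp.memLp f)).toLp _
      refine (MemLp.toLp_congr (hmul _ (Lp.memLp (c • f)))
        ((hmul (⇑f) (Lp.memLp f)).const_smul c) ?_).trans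
        (MemLp.toLp_const_smul c _)
      filter_upwards [Lp.coeFn_smul c f] with x hx
      simp only [hx, Pi.smul_apply, smul_eq_mul, mul_assoc] }
  have hTcoe : ∀ f : Lp ℂ p μ, (T f : X → ℂ) =ᵐ[μ] fun x => f x * g x := fun f =>
    MemLp.coeFn_toLp (hmul (⇑f) (Lp.memLp f))
  have hTcont : Continuous T := by
    apply LinearMap.continuous_of_seq_closed_graph
    intro u x y hux huy
    rw [Lp.tendsto_Lp_iff_tendsto_eLpNorm'] at hux huy
    have h1 : TendstoInMeasure μ (fun n => ⇑(u n)) atTop ⇑x :=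
      tendstoInMeasure_of_tendsto_eLpNorm_of_ne_top hp0 hp
        (fun n => Lp.aestronglyMeasurable _) (Lp.aestronglyMeasurable _) hux
    obtain ⟨ns, hns, hae1⟩ := h1.exists_seq_tendsto_ae
    have h2 : TendstoInMeasure μ (fun n => ⇑(T (u (ns n)))) atTop ⇑y :=
      tendstoInMeasure_of_tendsto_eLpNorm_of_ne_top hr0 hrtop
        (fun n => Lp.aestronglyMeasurable _) (Lp.aestronglyMeasurable _)
        (huy.comp hns.tendsto_atTop)
    obtain ⟨ms, hms, hae2⟩ := h2.exists_seq_tendsto_ae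
    have key : ⇑y =ᵐ[μ] fun a => x a * g a := by
      have hcoe : ∀ᵐ a ∂μ, ∀ n, (T (u (ns (ms n))) : X → ℂ) a = u (ns (ms n)) a * g a :=
        ae_all_iff.2 fun n => hTcoe _
      filter_upwards [hae1, hae2, hcoe] with a ha1 ha2 hc
      have h3 : Tendsto (fun i => u (ns (ms i)) a) atTop (𝓝 (x a)) :=
        ha1.comp hms.tendsto_atTop
      have h4 : Tendsto (fun i => u (ns (ms i)) a * g a) atTop (𝓝 (x a * g a)) :=
        h3.mul_const _
      have h5 : Tendsto (fun i => u (ns (ms i)) a * g a) atTop (𝓝 (y a)) := by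
        have := ha2
        simpa only [hc] using ha2
      exact (tendsto_nhds_unique h5 h4)
    have : y = (hmul x (Lp.memLp x)).toLp _ := by
      rw [← Lp.toLp_coeFn y ((Lp.memLp y))]
      exact MemLp.toLp_congr _ _ key
    exact this
  let T' : Lp ℂ p μ →L[ℂ] Lp ℂ r μ := ⟨T, hTcont⟩
  refine ⟨ENNReal.ofReal ‖T'‖, ofReal_ne_top, fun f hf => ?_⟩
  have h1 : ‖T' (hf.toLp f)‖ ≤ ‖T'‖ * ‖hf.toLp f‖ := T'.le_opNorm _
  have h2 : T' (hf.toLp f) = (hmul f hf).toLp _ := by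
    refine MemLp.toLp_congr (hmul _ (Lp.memLp (hf.toLp f))) (hmul f hf) ?_
    filter_upwards [hf.coeFn_toLp] with x hx
    simp only [hx]
  rw [h2, Lp.norm_toLp, Lp.norm_toLp] at h1
  have hfin1 : eLpNorm (fun x => f x * g x) r μ ≠ ∞ := (hmul f hf).2.ne
  rw [← ENNReal.ofReal_toReal hfin1]
  calc ENNReal.ofReal (eLpNorm (fun x => f x * g x) r μ).toReal
      ≤ ENNReal.ofReal (‖T'‖ * (eLpNorm f p μ).toReal) := ENNReal.ofReal_le_ofReal h1
    _ = ENNReal.ofReal ‖T'‖ * ENNReal.ofReal (eLpNorm f p μ).toReal :=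
        ENNReal.ofReal_mul (norm_nonneg _)
    _ = ENNReal.ofReal ‖T'‖ * eLpNorm f p μ := by rw [ENNReal.ofReal_toReal hf.2.ne]

/-- Let `(X, μ)` be a measure space with `μ X < ∞`, let
`1 ≤ r ≤ p < ∞`, and let `g : X → ℂ` be measurable such that `f * g ∈ L^r`
for every `f ∈ L^p`. Then `g ∈ L^q` where `1/p + 1/q = 1/r`
(with `q = ∞` when `p = r`). -/

theorem lp_multiplier_mem_Lq
    {X : Type*} [MeasurableSpace X] (μ : Measure X) [IsFiniteMeasure μ]
    (p r q : ℝ≥0∞) (hr : 1 ≤ r) (hrp : r ≤ p) (hp : p ≠ ∞)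
    (hq : 1 / p + 1 / q = 1 / r)
    (g : X → ℂ) (hg : Measurable g)
    (hmul : ∀ f : X → ℂ, MemLp f p μ → MemLp (fun x => f x * g x) r μ) :
    MemLp g q μ := by
  obtain ⟨C, hC, hbound⟩ := mul_op_bound μ p r hr hrp hp g hmul
  have hp1 : 1 ≤ p := hr.trans hrp
  have hp0 : p ≠ 0 := fun h => by simp [h] at hp1
  have hr0 : r ≠ 0 := fun h => by simp [h] at hr
  have hrtop : r ≠ ∞ := (hrp.trans_lt hp.lt_top).ne
  rcases eq_or_lt_of_le hrp with heq | hlt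
  · -- p = r, q = ∞
    subst heq
    have h1p : 1 / r ≠ ∞ := by simp [ENNReal.div_eq_top, hr0]
    have hq0 : 1 / q = 0 := by
      have : 1 / r + 1 / q = 1 / r + 0 := by rw [add_zero]; exact hq
      exact (ENNReal.add_right_inj h1p).1 this
    have hqtop : q = ∞ := by
      simpa [ENNReal.div_eq_zero_iff] using hq0
    subst hqtop
    set A := {x | C.toReal + 1 ≤ ‖g x‖} with hA
    have hAm : MeasurableSet A := measurableSet_le measurable_const hg.norm
    have hfA : MemLp (A.indicator fun _ => (1 : ℂ)) r μ :=
      memLp_indicator_const r hAm 1 (Or.inr (measure_ne_top μ A))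
    have hb := hbound _ hfA
    have hlow : eLpNorm (A.indicator fun _ => (C.toReal + 1 : ℝ)) r μ ≤
        eLpNorm (fun x => A.indicator (fun _ => (1 : ℂ)) x * g x) r μ := by
      apply eLpNorm_mono
      intro x
      by_cases hx : x ∈ A
      · simp only [Set.indicator_of_mem hx, one_mul, Real.norm_eq_abs]
        rw [abs_of_nonneg (by positivity)]
        exact hx
      · simp [Set.indicator_of_notMem hx]
    rw [eLpNorm_indicator_const hAm hr0 hrtop] at hlow
    rw [eLpNorm_indicator_const hAm hr0 hrtop] at hb
    have hcoe : (‖(C.toReal + 1 : ℝ)‖₊ : ℝ≥0∞) = C + 1 := by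
      rw [← enorm_eq_nnnorm, ← ofReal_norm, Real.norm_eq_abs, abs_of_nonneg (by positivity),
        ENNReal.ofReal_add ENNReal.toReal_nonneg zero_le_one, ENNReal.ofReal_one,
        ENNReal.ofReal_toReal hC]
    rw [enorm_eq_nnnorm, hcoe] at hlow
    have hμA : μ A = 0 := by
      by_contra hμA
      have hm0 : μ A ^ (1 / r.toReal) ≠ 0 := by
        simp [ENNReal.rpow_eq_zero_iff, hμA, measure_ne_top μ A]
      have hmt : μ A ^ (1 / r.toReal) ≠ ∞ := by
        refine ENNReal.rpow_ne_top_of_nonneg (by positivity) (measure_ne_top μ A)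
      have h3 : (C + 1) * μ A ^ (1 / r.toReal) ≤ C * μ A ^ (1 / r.toReal) := by
        refine hlow.trans (hb.trans ?_)
        simp
      have h4 : C + 1 ≤ C := (ENNReal.mul_le_mul_iff_left hm0 hmt).1 h3
      exact absurd h4 (not_le.2 (ENNReal.lt_add_right hC one_ne_zero))
    have hbd : ∀ᵐ x ∂μ, ‖g x‖ ≤ C.toReal + 1 := by
      rw [ae_iff]
      refine measure_mono_null ?_ hμA
      intro x hx
      simp only [Set.mem_setOf_eq, not_le] at hx
      exact le_of_lt hx
    exact memLp_top_of_bound hg.aestronglyMeasurable _ hbd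
  · -- r < p
    have hqtop : q ≠ ∞ := by
      intro h
      rw [h] at hq
      simp only [ENNReal.div_top, add_zero] at hq
      rw [one_div, one_div] at hq
      have hpr : p = r := by rw [← inv_inv p, hq, inv_inv]
      exact hlt.ne' hpr
    have hq0 : q ≠ 0 := by
      intro h
      rw [h, ENNReal.div_zero one_ne_zero, add_top] at hq
      have : r = 0 := by simpa [ENNReal.div_eq_top] using hq.symm
      rw [this] at hr
      exact absurd hr (by norm_num)
    set P := p.toReal with hPdef
    set R := r.toReal with hRdef
    set Q := q.toReal with hQdef
    have hP : 0 < P := ENNReal.toReal_pos hp0 hp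
    have hR : 0 < R := ENNReal.toReal_pos hr0 hrtop
    have hQ : 0 < Q := ENNReal.toReal_pos hq0 hqtop
    have hRP : R < P := by
      have := ENNReal.toReal_lt_toReal hrtop hp
      exact this.2 hlt
    have hPQR : 1 / P + 1 / Q = 1 / R := by
      have h1 : (1 / p + 1 / q).toReal = (1 / r).toReal := by rw [hq]
      rw [ENNReal.toReal_add (by simp [ENNReal.div_eq_top, hp0]) (by simp [ENNReal.div_eq_top, hq0])] at h1
      simpa [ENNReal.toReal_div] using h1
    set a := Q / P with hadef
    have ha : 0 ≤ a := by positivity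
    have haP : a * P = Q := div_mul_cancel₀ _ hP.ne'
    have haR : (a + 1) * R = Q := by
      have h2 : a + 1 = Q * (1 / R) := by
        rw [hadef, div_eq_mul_one_div, ← hPQR, mul_add, mul_one_div_cancel hQ.ne']
      rw [h2, one_div, mul_assoc, inv_mul_cancel₀ hR.ne', mul_one]
    set Sn : ℕ → Set X := fun n => {x | ‖g x‖ ≤ (n : ℝ)} with hSndef
    have hSm : ∀ n, MeasurableSet (Sn n) := fun n => measurableSet_le hg.norm measurable_const
    set fn : ℕ → X → ℂ := fun n => (Sn n).indicator (fun x => ((‖g x‖ ^ a : ℝ) : ℂ)) with hfndef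
    have hfn_meas : ∀ n, Measurable (fn n) := fun n =>
      (Complex.measurable_ofReal.comp (hg.norm.pow measurable_const)).indicator (hSm n)
    have hfn_mem : ∀ n, MemLp (fn n) p μ := by
      intro n
      refine MemLp.of_bound (hfn_meas n).aestronglyMeasurable ((n : ℝ) ^ a) (ae_of_all _ fun x => ?_)
      by_cases hx : x ∈ Sn n
      · simp only [hfndef, Set.indicator_of_mem hx, Complex.norm_real, Real.norm_eq_abs]
        rw [abs_of_nonneg (Real.rpow_nonneg (norm_nonneg _) a)]
        exact Real.rpow_le_rpow (norm_nonneg _) hx ha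
      · simp only [hfndef, Set.indicator_of_notMem hx, norm_zero]
        positivity
    set In : ℕ → ℝ≥0∞ := fun n => ∫⁻ x, (Sn n).indicator (fun x => (‖g x‖₊ : ℝ≥0∞) ^ Q) x ∂μ with hIndef
    have hIP : ∀ n, ∫⁻ x, (‖fn n x‖₊ : ℝ≥0∞) ^ P ∂μ = In n := by
      intro n
      refine lintegral_congr fun x => ?_
      by_cases hx : x ∈ Sn n
      · simp only [hfndef, Set.indicator_of_mem hx]
        rw [Complex.nnnorm_real, ← enorm_eq_nnnorm, ← ofReal_norm, Real.norm_eq_abs,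
          abs_of_nonneg (Real.rpow_nonneg (norm_nonneg _) a),
          ← ENNReal.ofReal_rpow_of_nonneg (norm_nonneg _) ha, ← ENNReal.rpow_mul, haP,
          ofReal_norm, enorm_eq_nnnorm]
      · simp only [hfndef, Set.indicator_of_notMem hx, nnnorm_zero, ENNReal.coe_zero,
          ENNReal.zero_rpow_of_pos hP]
    have hIR : ∀ n, ∫⁻ x, (‖fn n x * g x‖₊ : ℝ≥0∞) ^ R ∂μ = In n := by
      intro n
      refine lintegral_congr fun x => ?_
      by_cases hx : x ∈ Sn n
      · simp only [hfndef, Set.indicator_of_mem hx, nnnorm_mul, ENNReal.coe_mul]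
        rw [Complex.nnnorm_real, ← enorm_eq_nnnorm, ← ofReal_norm, Real.norm_eq_abs,
          abs_of_nonneg (Real.rpow_nonneg (norm_nonneg _) a),
          ← ENNReal.ofReal_rpow_of_nonneg (norm_nonneg _) ha, ofReal_norm, enorm_eq_nnnorm]
        rw [show ((‖g x‖₊ : ℝ≥0∞)) ^ a * (‖g x‖₊ : ℝ≥0∞) =
            ((‖g x‖₊ : ℝ≥0∞)) ^ (a + 1) by
          rw [ENNReal.rpow_add_of_nonneg a 1 ha zero_le_one, ENNReal.rpow_one]]
        rw [← ENNReal.rpow_mul, haR]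
      · simp only [hfndef, Set.indicator_of_notMem hx, zero_mul, nnnorm_zero, ENNReal.coe_zero,
          ENNReal.zero_rpow_of_pos hR]
    have hInfin : ∀ n, In n ≠ ∞ := by
      intro n
      have hle : In n ≤ (ENNReal.ofReal n) ^ Q * μ Set.univ := by
        rw [hIndef]
        calc ∫⁻ x, (Sn n).indicator (fun x => (‖g x‖₊ : ℝ≥0∞) ^ Q) x ∂μ
            ≤ ∫⁻ _x, (ENNReal.ofReal n) ^ Q ∂μ := by
              refine lintegral_mono fun x => ?_
              by_cases hx : x ∈ Sn n
              · rw [Set.indicator_of_mem hx]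
                refine ENNReal.rpow_le_rpow ?_ hQ.le
                rw [← enorm_eq_nnnorm, ← ofReal_norm]
                exact ENNReal.ofReal_le_ofReal hx
              · rw [Set.indicator_of_notMem hx]; exact zero_le
          _ = (ENNReal.ofReal n) ^ Q * μ Set.univ := lintegral_const _
      exact ne_top_of_le_ne_top (ENNReal.mul_ne_top
        (ENNReal.rpow_ne_top_of_nonneg hQ.le ENNReal.ofReal_ne_top) (measure_ne_top μ _)) hle
    have hkey : ∀ n, In n ≤ C ^ Q := by
      intro n
      have hb := hbound (fn n) (hfn_mem n)
      rw [eLpNorm_eq_lintegral_rpow_enorm_toReal hr0 hrtop,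
        eLpNorm_eq_lintegral_rpow_enorm_toReal hp0 hp] at hb
      simp only [← hPdef, ← hRdef, enorm_eq_nnnorm] at hb
      rw [hIR n, hIP n] at hb
      by_cases h0 : In n = 0
      · simp [h0]
      · have hne : In n ≠ ∞ := hInfin n
        have h1 : In n ^ (1 / R) = In n ^ (1 / Q) * In n ^ (1 / P) := by
          rw [← ENNReal.rpow_add _ _ h0 hne]
          congr 1
          linarith
        rw [h1] at hb
        have hP0 : In n ^ (1 / P) ≠ 0 := by
          simp [ENNReal.rpow_eq_zero_iff, h0, hne]
        have hPt : In n ^ (1 / P) ≠ ∞ :=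
          ENNReal.rpow_ne_top_of_nonneg (by positivity) hne
        have h2 : In n ^ (1 / Q) ≤ C := (ENNReal.mul_le_mul_iff_left hP0 hPt).1 hb
        calc In n = (In n ^ (1 / Q)) ^ Q := by
              rw [← ENNReal.rpow_mul, one_div, inv_mul_cancel₀ hQ.ne', ENNReal.rpow_one]
          _ ≤ C ^ Q := ENNReal.rpow_le_rpow h2 hQ.le
    have htot : ∫⁻ x, (‖g x‖₊ : ℝ≥0∞) ^ Q ∂μ ≤ C ^ Q := by
      have hmeas : ∀ n, Measurable fun x => (Sn n).indicator (fun x => (‖g x‖₊ : ℝ≥0∞) ^ Q) x :=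
        fun n => (hg.enorm.pow measurable_const).indicator (hSm n)
      have hmono : Monotone fun n => (Sn n).indicator (fun x => (‖g x‖₊ : ℝ≥0∞) ^ Q) := by
        intro n m hnm x
        refine Set.indicator_le_indicator_of_subset ?_ (fun _ => zero_le) x
        intro y hy
        simp only [hSndef, Set.mem_setOf_eq] at hy ⊢
        exact le_trans hy (Nat.cast_le.2 hnm)
      have heq2 : ∫⁻ x, (‖g x‖₊ : ℝ≥0∞) ^ Q ∂μ = ⨆ n, In n := by
        rw [hIndef, ← lintegral_iSup hmeas hmono]
        refine lintegral_congr fun x => ?_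
        obtain ⟨n, hn⟩ := exists_nat_ge ‖g x‖
        refine le_antisymm ?_ (iSup_le fun m => Set.indicator_le_self _ _ x)
        refine le_trans ?_ (le_iSup _ n)
        have hxn : x ∈ Sn n := hn
        rw [Set.indicator_of_mem hxn]
      rw [heq2]
      exact iSup_le hkey
    refine ⟨hg.aestronglyMeasurable, ?_⟩
    rw [eLpNorm_eq_lintegral_rpow_enorm_toReal hq0 hqtop]
    refine ENNReal.rpow_lt_top_of_nonneg (by positivity) ?_
    exact ne_top_of_le_ne_top (ENNReal.rpow_ne_top_of_nonneg hQ.le hC) htot
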